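/- arXiv:2110.11732 — 3 statements merged into one kernel-verified Lean document; each statement's English description precedes it below -/
import Mathlib

section
/- Let a and b be disjoint nonempty ordered sets. Every ordered partition (C_1,…,C_r) ∈ P_r(a ∪ b) can be written as α ⋓ β for a unique pair (α, β) ∈ P'_r(a) × P'_r(b), namely α = (C_1 ∩ a,…,C_r ∩ a) and β = (C_1 ∩ b,…,C_r ∩ b). Consequently the combinatorial join P(a) ∗_c P(b) := { α ⋓ β ∈ P_r(a ∪ b) : (α, β) ∈ P'_r(a) × P'_r(b), 1 ≤ r ≤ #a + #b } equals P(a ∪ b). (This realizes the identity P_m ∗_c P_n = P_{m+n} for permutahedra, whose faces are indexed by ordered partitions.) -/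
/-! Ordered sets are finite sets of (positive) integers, represented as `Finset ℕ`.
An augmented partition of `s` of length `n` is a list of `n` pairwise disjoint
(possibly empty) subsets of `s` whose union is `s`; an ordered partition additionally
has all blocks nonempty. -/

namespace Stmt1

/-- The union of the blocks of a list of finite sets. -/
def listUnion (L : List (Finset ℕ)) : Finset ℕ := L.foldr (· ∪ ·) ∅

/-- `L` is an augmented partition of `s` (of length `L.length`). -/
def IsAugPart (s : Finset ℕ) (L : List (Finset ℕ)) : Prop :=
  L.Pairwise Disjoint ∧ listUnion L = s

/-- `L` is an ordered partition of `s`. -/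
def IsOrdPart (s : Finset ℕ) (L : List (Finset ℕ)) : Prop :=
  IsAugPart s L ∧ ∀ X ∈ L, X ≠ ∅


lemma mem_subset_listUnion {L : List (Finset ℕ)} {X : Finset ℕ} (h : X ∈ L) :
    X ⊆ listUnion L := by
  induction L with
  | nil => exact absurd h List.not_mem_nil
  | cons Y L ih =>
    rw [List.mem_cons] at h
    rcases h with rfl | h
    · exact Finset.subset_union_left
    · exact (ih h).trans Finset.subset_union_right
  
lemma listUnion_map_inter (L : List (Finset ℕ)) (a : Finset ℕ) :
    listUnion (L.map (· ∩ a)) = listUnion L ∩ a := by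
  induction L with
  | nil => simp [listUnion]
  | cons Y L ih =>
    simp only [listUnion, List.map, List.foldr] at *
    rw [ih, Finset.union_inter_distrib_right]
    
lemma disjoint_listUnion {L : List (Finset ℕ)} {X : Finset ℕ}
    (h : ∀ Y ∈ L, Disjoint X Y) : Disjoint X (listUnion L) := by
  induction L with
  | nil => simp [listUnion]
  | cons Y L ih =>
    simp only [listUnion, List.foldr ] at *
    exact Finset.disjoint_union_right.2 ⟨h Y (by simp), ih fun Z hZ => h Z (by simp [hZ])⟩

lemma length_le_card {L : List (Finset ℕ)} (hp : L.Pairwise Disjoint)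
    (hne : ∀ X ∈ L, X ≠ ∅) : L.length ≤ (listUnion L).card := by
  induction L with
  | nil => simp
  | cons Y L ih =>
    have hd : Disjoint Y (listUnion L) := disjoint_listUnion (List.pairwise_cons.1 hp).1
    have : (listUnion (Y :: L)).card = Y.card + (listUnion L).card := by
      simpa [listUnion] using Finset.card_union_of_disjoint hd
    have hY : 1 ≤ Y.card := Finset.card_pos.2 (Finset.nonempty_iff_ne_empty.2 (hne Y (by simp)))
    have := ih (List.pairwise_cons.1 hp).2 (fun X hX => hne X (by simp [hX]))
    simp only [List.length_cons]
    omega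

lemma zip_map_inter {a b : Finset ℕ} (hab : Disjoint a b) :
    ∀ (α β : List (Finset ℕ)), α.length = β.length → (∀ X ∈ α, X ⊆ a) → (∀ X ∈ β, X ⊆ b) →
    (List.zipWith (· ∪ ·) α β).map (· ∩ a) = α := by
  intro α
  induction α with
  | nil => intro β h _ _; simp
  | cons A α ih =>
    intro β h hα hβ
    cases β with
    | nil => simp at h
    | cons B β =>
      simp only [List.zipWith, List.map]
      rw [ih β (by simpa using h) (fun X hX => hα X (by simp [hX])) (fun X hX => hβ X (by simp [hX]))]
      have h1 : A ∩ a = A := Finset.inter_eq_left.2 (hα A (by simp))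
      have h2 : B ∩ a = ∅ := by
        rw [← Finset.disjoint_iff_inter_eq_empty]
        exact Finset.disjoint_of_subset_left (hβ B (by simp)) hab.symm
      rw [Finset.union_inter_distrib_right, h1, h2, Finset.union_empty]


lemma zip_map_inter_right {a b : Finset ℕ} (hab : Disjoint a b) :
    ∀ (α β : List (Finset ℕ)), α.length = β.length → (∀ X ∈ α, X ⊆ a) → (∀ X ∈ β, X ⊆ b) →
    (List.zipWith (· ∪ ·) α β).map (· ∩ b) = β := by
  intro α
  induction α with
  | nil => intro β h _ _; cases β with
    | nil => simp
    | cons B β => simp at h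
  | cons A α ih =>
    intro β h hα hβ
    cases β with
    | nil => simp at h
    | cons B β =>
      simp only [List.zipWith, List.map]
      rw [ih β (by simpa using h) (fun X hX => hα X (by simp [hX])) (fun X hX => hβ X (by simp [hX]))]
      have h1 : B ∩ b = B := Finset.inter_eq_left.2 (hβ B (by simp))
      have h2 : A ∩ b = ∅ := by
        rw [← Finset.disjoint_iff_inter_eq_empty]
        exact Finset.disjoint_of_subset_left (hα A (by simp)) hab
      rw [Finset.union_inter_distrib_right, h1, h2, Finset.empty_union]

lemma zip_self (a b : Finset ℕ) (C : List (Finset ℕ)) :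
    List.zipWith (· ∪ ·) (C.map (· ∩ a)) (C.map (· ∩ b)) = C.map (fun X => X ∩ a ∪ X ∩ b) := by
  induction C with
  | nil => simp
  | cons X C ih => simp [ih]

lemma canon (a b : Finset ℕ) {C : List (Finset ℕ)} (hC : IsOrdPart (a ∪ b) C) :
    IsAugPart a (C.map (· ∩ a)) ∧ IsAugPart b (C.map (· ∩ b)) ∧
    List.zipWith (· ∪ ·) (C.map (· ∩ a)) (C.map (· ∩ b)) = C := by
  obtain ⟨⟨hpw, hun⟩, hne⟩ := hC
  have hsub : ∀ X ∈ C, X ⊆ a ∪ b := fun X hX => hun ▸ mem_subset_listUnion hX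
  refine ⟨⟨?_, ?_⟩, ⟨?_, ?_⟩, ?_⟩
  · exact hpw.map _ (fun _ _ h => h.mono Finset.inter_subset_left Finset.inter_subset_left)
  · rw [listUnion_map_inter, hun, Finset.union_inter_cancel_left]
  · exact hpw.map _ (fun _ _ h => h.mono Finset.inter_subset_left Finset.inter_subset_left)
  · rw [listUnion_map_inter, hun, Finset.union_inter_cancel_right]
  · rw [zip_self]
    have : ∀ X ∈ C, X ∩ a ∪ X ∩ b = X := fun X hX => by
      rw [← Finset.inter_union_distrib_left]
      exact Finset.inter_eq_left.2 (hsub X hX)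
    calc C.map (fun X => X ∩ a ∪ X ∩ b) = C.map id := List.map_congr_left this
    _ = C := List.map_id C

/-- For disjoint nonempty ordered sets `a`, `b`, every ordered partition
`C ∈ P_r(a ∪ b)` is `α ⋓ β` for a unique `(α, β) ∈ P'_r(a) × P'_r(b)`, namely
`α = (C₁ ∩ a,…)`, `β = (C₁ ∩ b,…)`; consequently the combinatorial join
`P(a) ∗_c P(b)` equals `P(a ∪ b)`. -/
theorem statement1 (a b : Finset ℕ) (hab : Disjoint a b)
    (ha : a.Nonempty) (hb : b.Nonempty) :
    (∀ (r : ℕ) (C : List (Finset ℕ)), C.length = r → IsOrdPart (a ∪ b) C →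
      (∃! p : List (Finset ℕ) × List (Finset ℕ),
        p.1.length = r ∧ IsAugPart a p.1 ∧ p.2.length = r ∧ IsAugPart b p.2 ∧
        List.zipWith (· ∪ ·) p.1 p.2 = C) ∧
      ((C.map (· ∩ a)).length = r ∧ IsAugPart a (C.map (· ∩ a)) ∧
       (C.map (· ∩ b)).length = r ∧ IsAugPart b (C.map (· ∩ b)) ∧
       List.zipWith (· ∪ ·) (C.map (· ∩ a)) (C.map (· ∩ b)) = C)) ∧
    {C : List (Finset ℕ) | ∃ r : ℕ, 1 ≤ r ∧ r ≤ a.card + b.card ∧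
        ∃ α β : List (Finset ℕ), α.length = r ∧ IsAugPart a α ∧
          β.length = r ∧ IsAugPart b β ∧
          C = List.zipWith (· ∪ ·) α β ∧ IsOrdPart (a ∪ b) C}
      = {C : List (Finset ℕ) | IsOrdPart (a ∪ b) C} := by
  constructor
  · intro r C hr hC
    have hcanon := canon a b hC
    constructor
    · refine ⟨(C.map (· ∩ a), C.map (· ∩ b)),
        ⟨by simp [hr], hcanon.1, by simp [hr], hcanon.2.1, hcanon.2.2⟩, ?_⟩
      rintro ⟨α, β⟩ ⟨h1, ⟨hpa, hua⟩, h2, ⟨hpb, hub⟩, hzip⟩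
      have hsa : ∀ X ∈ α, X ⊆ a := fun X hX => hua ▸ mem_subset_listUnion hX
      have hsb : ∀ X ∈ β, X ⊆ b := fun X hX => hub ▸ mem_subset_listUnion hX
      have e1 : (List.zipWith (· ∪ ·) α β).map (· ∩ a) = α :=
        zip_map_inter hab α β (h1.trans h2.symm) hsa hsb
      have e2 : (List.zipWith (· ∪ ·) α β).map (· ∩ b) = β :=
        zip_map_inter_right hab α β (h1.trans h2.symm) hsa hsb
      rw [hzip] at e1 e2
      simp only [Prod.mk.injEq]
      exact ⟨e1.symm, e2.symm⟩
    · exact ⟨by simp [hr], hcanon.1, by simp [hr], hcanon.2.1, hcanon.2.2⟩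
  · ext C
    simp only [Set.mem_setOf_eq]
    constructor
    · rintro ⟨r, _, _, α, β, _, _, _, _, _, hC⟩
      exact hC
    · intro hC
      have hcanon := canon a b hC
      refine ⟨C.length, ?_, ?_, C.map (· ∩ a), C.map (· ∩ b),
        by simp, hcanon.1, by simp, hcanon.2.1, hcanon.2.2.symm, hC⟩
      · rcases C with _ | ⟨X, C⟩
        · exfalso
          have h := hC.1.2
          simp only [listUnion, List.foldr_nil] at h
          exact ha.ne_empty (Finset.union_eq_empty.1 h.symm).1
        · simp
      · have h1 := length_le_card hC.1.1 hC.2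
        rw [hC.1.2, Finset.card_union_of_disjoint hab] at h1
        exact h1


end Stmt1
end

section
/- Fix n ≥ 1 and 1 ≤ k ≤ n. For an ordered partition (B_1,…,B_k) of {1,…,n}, define A_1 = {1,…,n} and A_{i+1} = A_i ∖ B_i, let (β_{i,1},…,β_{i,s_i}) = EP_{A_i}(B_i), and set n_{i,j} = #β_{i,j} + 1. Then the assignment (B_1,…,B_k) ↦ ((n_{i,1},…,n_{i,s_i}))_{1 ≤ i ≤ k} is a bijection from the set of ordered partitions of {1,…,n} of length k onto the set of sequences of tuples of positive integers ((n_{i,1},…,n_{i,s_i}))_{1 ≤ i ≤ k} satisfying: s_k = 1; s_i = n_{i+1,1} + ⋯ + n_{i+1,s_{i+1}} for 1 ≤ i < k; for each i there exists j with n_{i,j} ≥ 2; and Σ_{i,j} (n_{i,j} − 1) = n. (Such sequences are exactly the leaf decompositions of down-rooted planar leveled trees with n + 1 leaves and k levels, so ordered partitions of {1,…,n} are in bijection with planar leveled trees with n + 1 leaves.) -/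
/-! Ordered partitions of `{1,…,n}` of length `k` versus leaf decompositions of
down-rooted planar leveled trees with `n+1` leaves and `k` levels.
The embedding partition `EP_b(a)` of `a ⊆ b` is encoded in closed form: its blocks are
the intersections of `a` with the intervals cut out by the elements of `b ∖ a`. -/

namespace Stmt3

/-- Split `a` along an increasing list of cut points. -/
def epBlocks (a : Finset ℕ) : List ℕ → List (Finset ℕ)
  | [] => [a]
  | d :: ds => (a.filter (fun x => x < d)) :: epBlocks (a.filter (fun x => d < x)) ds

/-- The embedding partition `EP_b(a)` of `a ⊆ b`. -/
def EP (b a : Finset ℕ) : List (Finset ℕ) :=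
  epBlocks a ((b \ a).sort (· ≤ ·))

/-- Ordered partitions `(B₁,…,B_k)` of `{1,…,n}` of length `k`. -/
def OrdPartFn (n k : ℕ) : Set (Fin k → Finset ℕ) :=
  {B | (∀ i, B i ≠ ∅) ∧ (∀ i j, i ≠ j → Disjoint (B i) (B j)) ∧
       Finset.univ.biUnion B = Finset.Icc 1 n}

/-- Sequences of tuples of positive integers `((n_{i,1},…,n_{i,s_i}))_{1 ≤ i ≤ k}`
satisfying: `s_k = 1`; `s_i = n_{i+1,1} + ⋯ + n_{i+1,s_{i+1}}` for `i < k`;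
for each `i` some `n_{i,j} ≥ 2`; and `∑_{i,j} (n_{i,j} − 1) = n`.
These are exactly the leaf decompositions of down-rooted planar leveled trees with
`n+1` leaves and `k` levels. -/
def LeafSeqs (n k : ℕ) : Set (Fin k → List ℕ) :=
  {L | (∀ i : Fin k, ∀ m ∈ L i, 1 ≤ m) ∧
       (∀ i : Fin k, (i : ℕ) = k - 1 → (L i).length = 1) ∧
       (∀ (i : Fin k) (h : (i : ℕ) + 1 < k), (L i).length = (L ⟨(i : ℕ) + 1, h⟩).sum) ∧
       (∀ i : Fin k, ∃ m ∈ L i, 2 ≤ m) ∧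
       (∑ i : Fin k, ((L i).map (fun m => m - 1)).sum) = n}

lemma epBlocks_length (a : Finset ℕ) (ds : List ℕ) :
    (epBlocks a ds).length = ds.length + 1 := by
  induction ds generalizing a with
  | nil => simp [epBlocks]
  | cons d t ih => simp [epBlocks, ih]

lemma filter_lt_gt_card (a : Finset ℕ) (d : ℕ) (hd : d ∉ a) :
    (a.filter (fun x => x < d)).card + (a.filter (fun x => d < x)).card = a.card := by
  have h : a.filter (fun x => d < x) = a.filter (fun x => ¬ x < d) := by
    ext x
    simp only [Finset.mem_filter]
    constructor
    · rintro ⟨hx, h2⟩; exact ⟨hx, by omega⟩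
    · rintro ⟨hx, h2⟩; refine ⟨hx, ?_⟩
      rcases Nat.lt_trichotomy x d with h3 | h3 | h3
      · omega
      · exact absurd (h3 ▸ hx) hd
      · exact h3
  rw [h, Finset.card_filter_add_card_filter_not]

lemma epBlocks_sum (a : Finset ℕ) (ds : List ℕ) (h : ∀ d ∈ ds, d ∉ a) :
    ((epBlocks a ds).map Finset.card).sum = a.card := by
  induction ds generalizing a with
  | nil => simp [epBlocks]
  | cons d t ih =>
    simp only [epBlocks, List.map_cons, List.sum_cons]
    rw [ih _ (fun e he hea => h e (List.mem_cons_of_mem _ he) (Finset.mem_of_mem_filter _ hea))]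
    exact filter_lt_gt_card a d (h d (List.mem_cons_self))

lemma epBlocks_subset (a : Finset ℕ) (ds : List ℕ) {β : Finset ℕ}
    (hβ : β ∈ epBlocks a ds) : β ⊆ a := by
  induction ds generalizing a with
  | nil => simp [epBlocks] at hβ; simp [hβ]
  | cons d t ih =>
    simp only [epBlocks, List.mem_cons] at hβ
    rcases hβ with h | h
    · exact h ▸ Finset.filter_subset _ _
    · exact (ih _ h).trans (Finset.filter_subset _ _)

lemma epBlocks_cover (a : Finset ℕ) (ds : List ℕ) (h : ∀ d ∈ ds, d ∉ a)
    {x : ℕ} (hx : x ∈ a) : ∃ β ∈ epBlocks a ds, x ∈ β := by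
  induction ds generalizing a with
  | nil => exact ⟨a, by simp [epBlocks], hx⟩
  | cons d t ih =>
    rcases Nat.lt_trichotomy x d with h3 | h3 | h3
    · exact ⟨a.filter (fun y => y < d), by simp [epBlocks], Finset.mem_filter.2 ⟨hx, h3⟩⟩
    · exact absurd (h3 ▸ hx) (h d (List.mem_cons_self))
    · obtain ⟨β, hβ, hxβ⟩ := ih (a.filter (fun y => d < y))
        (fun e he hea => h e (List.mem_cons_of_mem _ he) (Finset.mem_of_mem_filter _ hea))
        (Finset.mem_filter.2 ⟨hx, h3⟩)
      exact ⟨β, by simp [epBlocks, hβ], hxβ⟩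





lemma card_filter_lt_inj (A : Finset ℕ) {d d' : ℕ} (hd : d ∈ A) (hd' : d' ∈ A)
    (h : (A.filter (fun x => x < d)).card = (A.filter (fun x => x < d')).card) : d = d' := by
  by_contra hne
  rcases Nat.lt_or_ge d d' with h3 | h3
  · have : A.filter (fun x => x < d) ⊂ A.filter (fun x => x < d') := by
      refine ⟨Finset.filter_subset_filter _ (le_refl A) |>.trans ?_, ?_⟩
      · intro x hx; simp only [Finset.mem_filter] at hx ⊢; exact ⟨hx.1, hx.2.trans h3⟩
      · intro hsub
        have := hsub (Finset.mem_filter.2 ⟨hd, h3⟩)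
        simp at this
    exact absurd h (Finset.card_lt_card this).ne
  · have h3' : d' < d := by omega
    have : A.filter (fun x => x < d') ⊂ A.filter (fun x => x < d) := by
      refine ⟨?_, ?_⟩
      · intro x hx; simp only [Finset.mem_filter] at hx ⊢; exact ⟨hx.1, hx.2.trans h3'⟩
      · intro hsub
        have := hsub (Finset.mem_filter.2 ⟨hd', h3'⟩)
        simp at this
    exact absurd h.symm (Finset.card_lt_card this).ne

lemma filter_lt_head (A B : Finset ℕ) (d : ℕ) (t : List ℕ) (hBA : B ⊆ A)
    (hs : (d :: t).Pairwise (· < ·))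
    (hmem : ∀ x, x ∈ A ↔ x ∈ B ∨ x ∈ d :: t) :
    B.filter (fun x => x < d) = A.filter (fun x => x < d) := by
  ext x
  simp only [Finset.mem_filter]
  constructor
  · rintro ⟨hx, h2⟩; exact ⟨hBA hx, h2⟩
  · rintro ⟨hx, h2⟩
    refine ⟨?_, h2⟩
    rcases (hmem x).1 hx with h | h
    · exact h
    · rcases List.mem_cons.1 h with rfl | h
      · omega
      · have := (List.pairwise_cons.1 hs).1 x h
        omega

lemma epBlocks_inj : ∀ (ds ds' : List ℕ) (A B B' : Finset ℕ),
    B ⊆ A → B' ⊆ A → ds.Pairwise (· < ·) → ds'.Pairwise (· < ·) →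
    (∀ x, x ∈ A ↔ x ∈ B ∨ x ∈ ds) → (∀ x, x ∈ A ↔ x ∈ B' ∨ x ∈ ds') →
    (∀ d ∈ ds, d ∉ B) → (∀ d ∈ ds', d ∉ B') →
    (epBlocks B ds).map Finset.card = (epBlocks B' ds').map Finset.card → B = B' := by
  intro ds
  induction ds with
  | nil =>
    intro ds' A B B' hBA hB'A _ _ hmem hmem' _ _ hcard
    have hlen : ds'.length = 0 := by
      have := congrArg List.length hcard
      rw [List.length_map, List.length_map, epBlocks_length, epBlocks_length] at this
      simp only [List.length_nil, List.length_cons] at this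
      omega
    rw [List.length_eq_zero_iff] at hlen
    subst hlen
    have h1 : B = A := by ext x; rw [hmem x]; simp
    have h2 : B' = A := by ext x; rw [hmem' x]; simp
    rw [h1, h2]
  | cons d t ih =>
    intro ds' A B B' hBA hB'A hs hs' hmem hmem' hdB hdB' hcard
    obtain ⟨d', t', rfl⟩ : ∃ e t', ds' = e :: t' := by
      have := congrArg List.length hcard
      rw [List.length_map, List.length_map, epBlocks_length, epBlocks_length] at this
      simp only [List.length_nil, List.length_cons] at this
      cases ds' with
      | nil => simp at this
      | cons e t' => exact ⟨e, t', rfl⟩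
    have hfB : B.filter (fun x => x < d) = A.filter (fun x => x < d) :=
      filter_lt_head A B d t hBA hs hmem
    have hfB' : B'.filter (fun x => x < d') = A.filter (fun x => x < d') :=
      filter_lt_head A B' d' t' hB'A hs' hmem'
    simp only [epBlocks, List.map_cons, List.cons.injEq] at hcard
    have hdd' : d = d' := by
      apply card_filter_lt_inj A ((hmem d).2 (Or.inr (List.mem_cons_self)))
        ((hmem' d').2 (Or.inr (List.mem_cons_self)))
      rw [← hfB, ← hfB']; exact hcard.1
    subst hdd'
    have key : B.filter (fun x => d < x) = B'.filter (fun x => d < x) := by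
      apply ih t' (A.filter (fun x => d < x)) _ _
      · intro x hx
        simp only [Finset.mem_filter] at hx ⊢
        exact ⟨hBA hx.1, hx.2⟩
      · intro x hx
        simp only [Finset.mem_filter] at hx ⊢
        exact ⟨hB'A hx.1, hx.2⟩
      · exact (List.pairwise_cons.1 hs).2
      · exact (List.pairwise_cons.1 hs').2
      · intro x
        simp only [Finset.mem_filter]
        constructor
        · rintro ⟨hx, h2⟩
          rcases (hmem x).1 hx with h | h
          · exact Or.inl ⟨h, h2⟩
          · rcases List.mem_cons.1 h with rfl | h
            · omega
            · exact Or.inr h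
        · rintro (⟨h1, h2⟩ | h)
          · exact ⟨hBA h1, h2⟩
          · exact ⟨(hmem x).2 (Or.inr (List.mem_cons_of_mem _ h)),
              (List.pairwise_cons.1 hs).1 x h⟩
      · intro x
        simp only [Finset.mem_filter]
        constructor
        · rintro ⟨hx, h2⟩
          rcases (hmem' x).1 hx with h | h
          · exact Or.inl ⟨h, h2⟩
          · rcases List.mem_cons.1 h with rfl | h
            · omega
            · exact Or.inr h
        · rintro (⟨h1, h2⟩ | h)
          · exact ⟨hB'A h1, h2⟩
          · exact ⟨(hmem' x).2 (Or.inr (List.mem_cons_of_mem _ h)),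
              (List.pairwise_cons.1 hs').1 x h⟩
      · intro e he hmemf
        exact hdB e (List.mem_cons_of_mem _ he) (Finset.mem_of_mem_filter _ hmemf)
      · intro e he hmemf
        exact hdB' e (List.mem_cons_of_mem _ he) (Finset.mem_of_mem_filter _ hmemf)
      · exact hcard.2
    ext x
    have hxd : x ∈ B → x ≠ d := fun hx h => hdB d (List.mem_cons_self) (h ▸ hx)
    have hxd' : x ∈ B' → x ≠ d := fun hx h => hdB' d (List.mem_cons_self) (h ▸ hx)
    constructor
    · intro hx
      rcases Nat.lt_trichotomy x d with h3 | h3 | h3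
      · have : x ∈ B'.filter (fun y => y < d) := by
          rw [hfB', ← hfB]; exact Finset.mem_filter.2 ⟨hx, h3⟩
        exact Finset.mem_of_mem_filter _ this
      · exact absurd h3 (hxd hx)
      · have : x ∈ B'.filter (fun y => d < y) := by
          rw [← key]; exact Finset.mem_filter.2 ⟨hx, h3⟩
        exact Finset.mem_of_mem_filter _ this
    · intro hx
      rcases Nat.lt_trichotomy x d with h3 | h3 | h3
      · have : x ∈ B.filter (fun y => y < d) := by
          rw [hfB, ← hfB']; exact Finset.mem_filter.2 ⟨hx, h3⟩
        exact Finset.mem_of_mem_filter _ this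
      · exact absurd h3 (hxd' hx)
      · have : x ∈ B.filter (fun y => d < y) := by
          rw [key]; exact Finset.mem_filter.2 ⟨hx, h3⟩
        exact Finset.mem_of_mem_filter _ this





lemma EP_length (A B : Finset ℕ) : (EP A B).length = (A \ B).card + 1 := by
  rw [EP, epBlocks_length, Finset.length_sort]

lemma EP_sum (A B : Finset ℕ) (hBA : B ⊆ A) :
    ((EP A B).map Finset.card).sum = B.card := by
  apply epBlocks_sum
  intro d hd
  rw [Finset.mem_sort] at hd
  exact (Finset.mem_sdiff.1 hd).2

lemma EP_block_subset (A B : Finset ℕ) {β : Finset ℕ} (hβ : β ∈ EP A B) : β ⊆ B :=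
  epBlocks_subset _ _ hβ

lemma EP_cover (A B : Finset ℕ) {x : ℕ} (hx : x ∈ B) : ∃ β ∈ EP A B, x ∈ β := by
  apply epBlocks_cover
  · intro d hd
    rw [Finset.mem_sort] at hd
    exact (Finset.mem_sdiff.1 hd).2
  · exact hx

lemma EP_inj (A B B' : Finset ℕ) (hBA : B ⊆ A) (hB'A : B' ⊆ A)
    (h : (EP A B).map Finset.card = (EP A B').map Finset.card) : B = B' := by
  apply epBlocks_inj ((A \ B).sort (· ≤ ·)) ((A \ B').sort (· ≤ ·)) A B B' hBA hB'A
    (Finset.sortedLT_sort _).pairwise (Finset.sortedLT_sort _).pairwise _ _ _ _ h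
  · intro x
    simp only [Finset.mem_sort, Finset.mem_sdiff]
    constructor
    · intro hx; by_cases hB : x ∈ B
      · exact Or.inl hB
      · exact Or.inr ⟨hx, hB⟩
    · rintro (hx | hx)
      · exact hBA hx
      · exact hx.1
  · intro x
    simp only [Finset.mem_sort, Finset.mem_sdiff]
    constructor
    · intro hx; by_cases hB : x ∈ B'
      · exact Or.inl hB
      · exact Or.inr ⟨hx, hB⟩
    · rintro (hx | hx)
      · exact hB'A hx
      · exact hx.1
  · intro d hd
    rw [Finset.mem_sort] at hd
    exact (Finset.mem_sdiff.1 hd).2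
  · intro d hd
    rw [Finset.mem_sort] at hd
    exact (Finset.mem_sdiff.1 hd).2





lemma map_pred_succ (l : List ℕ) (h : ∀ x ∈ l, 1 ≤ x) : (l.map (· - 1)).map (· + 1) = l := by
  induction l with
  | nil => simp
  | cons a t ih =>
    simp only [List.map_cons, List.cons.injEq]
    refine ⟨?_, ih (fun x hx => h x (List.mem_cons_of_mem _ hx))⟩
    have := h a (List.mem_cons_self)
    omega

lemma map_succ_pred (l : List ℕ) : (l.map (· + 1)).map (· - 1) = l := by
  induction l with
  | nil => simp
  | cons a t ih => simp [ih]

lemma sum_map_pred (l : List ℕ) (h : ∀ x ∈ l, 1 ≤ x) :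
    (l.map (· - 1)).sum + l.length = l.sum := by
  induction l with
  | nil => simp
  | cons a t ih =>
    simp only [List.map_cons, List.sum_cons, List.length_cons]
    have h1 := h a (List.mem_cons_self)
    have h2 := ih (fun x hx => h x (List.mem_cons_of_mem _ hx))
    omega

lemma sum_map_succ (l : List ℕ) : (l.map (· + 1)).sum = l.sum + l.length := by
  induction l with
  | nil => simp
  | cons a t ih => simp only [List.map_cons, List.sum_cons, List.length_cons, ih]; omega

lemma EP_surj (A : Finset ℕ) (cs : List ℕ) (h : cs.sum + cs.length = A.card + 1) :
    ∃ B ⊆ A, (EP A B).map Finset.card = cs := by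
  classical
  set m := A.card with hm
  set g : Composition (m + 1) → List ℕ := fun c => c.blocks.map (· - 1) with hg
  have hginj : Function.Injective g := by
    intro c c' hcc
    ext1
    have := congrArg (List.map (· + 1)) hcc
    rwa [hg, map_pred_succ _ (fun x hx => c.blocks_pos hx),
      map_pred_succ _ (fun x hx => c'.blocks_pos hx)] at this
  set T : Finset (List ℕ) := Finset.univ.image g with hT
  have hTcard : T.card = 2 ^ m := by
    rw [hT, Finset.card_image_of_injective _ hginj, Finset.card_univ, composition_card]
    simp
  have hmemT : ∀ l : List ℕ, l.sum + l.length = m + 1 → l ∈ T := by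
    intro l hl
    have hc : (l.map (· + 1)).sum = m + 1 := by rw [sum_map_succ]; omega
    refine Finset.mem_image.2 ⟨⟨l.map (· + 1), ?_, hc⟩, Finset.mem_univ _, ?_⟩
    · intro i hi
      simp only [List.mem_map] at hi
      obtain ⟨x, _, rfl⟩ := hi
      omega
    · simpa [hg] using map_succ_pred l
  set f : Finset ℕ → List ℕ := fun B => (EP A B).map Finset.card with hf
  have hmapsto : ∀ B ∈ A.powerset, f B ∈ T := by
    intro B hB
    rw [Finset.mem_powerset] at hB
    apply hmemT
    have h1 : (f B).sum = B.card := EP_sum A B hB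
    have h2 : (f B).length = (A \ B).card + 1 := by
      rw [hf]; simp only [List.length_map]; exact EP_length A B
    rw [h1, h2, ← Nat.add_assoc]
    have := Finset.card_sdiff_add_card_eq_card hB
    omega
  have hinjon : Set.InjOn f ↑A.powerset := by
    intro B hB B' hB' hBB'
    rw [Finset.mem_coe, Finset.mem_powerset] at hB hB'
    exact EP_inj A B B' hB hB' hBB'
  have himage : A.powerset.image f = T := by
    apply Finset.eq_of_subset_of_card_le
    · intro l hl
      rw [Finset.mem_image] at hl
      obtain ⟨B, hB, rfl⟩ := hl
      exact hmapsto B hB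
    · rw [Finset.card_image_of_injOn hinjon, Finset.card_powerset, hTcard]
  have hcs : cs ∈ T := hmemT cs h
  rw [← himage, Finset.mem_image] at hcs
  obtain ⟨B, hB, hBcs⟩ := hcs
  exact ⟨B, Finset.mem_powerset.1 hB, hBcs⟩



/-- `A_i`: what remains of `{1,…,n}` after removing the first `m` blocks. -/
def AA (n : ℕ) (F : ℕ → Finset ℕ) (m : ℕ) : Finset ℕ :=
  Finset.Icc 1 n \ (Finset.range m).biUnion F

lemma AA_zero (n : ℕ) (F : ℕ → Finset ℕ) : AA n F 0 = Finset.Icc 1 n := by simp [AA]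

lemma AA_succ (n : ℕ) (F : ℕ → Finset ℕ) (m : ℕ) : AA n F (m + 1) = AA n F m \ F m := by
  ext x
  simp only [AA, Finset.mem_sdiff, Finset.mem_biUnion, Finset.mem_range, Nat.lt_succ_iff_lt_or_eq]
  constructor
  · rintro ⟨hx, hn⟩
    exact ⟨⟨hx, fun ⟨j, hj, hxj⟩ => hn ⟨j, Or.inl hj, hxj⟩⟩, fun hxm => hn ⟨m, Or.inr rfl, hxm⟩⟩
  · rintro ⟨⟨hx, hn⟩, hm⟩
    refine ⟨hx, ?_⟩
    rintro ⟨j, hj | rfl, hxj⟩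
    · exact hn ⟨j, hj, hxj⟩
    · exact hm hxj

lemma AA_subset_Icc (n : ℕ) (F : ℕ → Finset ℕ) (m : ℕ) : AA n F m ⊆ Finset.Icc 1 n :=
  Finset.sdiff_subset

lemma AA_congr (n : ℕ) {F F' : ℕ → Finset ℕ} (m : ℕ) (h : ∀ j < m, F j = F' j) :
    AA n F m = AA n F' m := by
  unfold AA
  congr 1
  apply Finset.biUnion_congr rfl
  intro j hj
  exact h j (Finset.mem_range.1 hj)

/-- Extend a `Fin k`-indexed family to `ℕ`. -/
def ext0 {k : ℕ} (B : Fin k → Finset ℕ) : ℕ → Finset ℕ :=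
  fun m => if h : m < k then B ⟨m, h⟩ else ∅

lemma stmtA_eq {k : ℕ} (n : ℕ) (B : Fin k → Finset ℕ) (i : Fin k) :
    Finset.Icc 1 n \ (Finset.univ.filter (fun j => j < i)).biUnion B = AA n (ext0 B) (i : ℕ) := by
  unfold AA
  congr 1
  ext x
  simp only [Finset.mem_biUnion, Finset.mem_filter, Finset.mem_univ, true_and,
    Finset.mem_range]
  constructor
  · rintro ⟨j, hj, hx⟩
    refine ⟨(j : ℕ), hj, ?_⟩
    rw [ext0, dif_pos j.isLt]
    simpa using hx
  · rintro ⟨m, hm, hx⟩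
    have hmk : m < k := hm.trans i.isLt
    rw [ext0, dif_pos hmk] at hx
    exact ⟨⟨m, hmk⟩, hm, hx⟩

/-- Choose a block with given embedding-partition cardinalities, if one exists. -/
noncomputable def stepB (A : Finset ℕ) (cs : List ℕ) : Finset ℕ :=
  if h : ∃ B, B ⊆ A ∧ (EP A B).map Finset.card = cs then h.choose else ∅

lemma stepB_spec (A : Finset ℕ) (cs : List ℕ) (h : cs.sum + cs.length = A.card + 1) :
    stepB A cs ⊆ A ∧ (EP A (stepB A cs)).map Finset.card = cs := by
  obtain ⟨B, hB, hBcs⟩ := EP_surj A cs h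
  have hex : ∃ B, B ⊆ A ∧ (EP A B).map Finset.card = cs := ⟨B, hB, hBcs⟩
  rw [stepB, dif_pos hex]
  exact hex.choose_spec

/-- The inverse construction: blocks chosen level by level. -/
noncomputable def invF (n : ℕ) (Lx : ℕ → List ℕ) : ℕ → Finset ℕ
  | i =>
    stepB (Finset.Icc 1 n \ (Finset.range i).attach.biUnion fun j =>
      have : j.1 < i := Finset.mem_range.1 j.2
      invF n Lx j.1) ((Lx i).map (· - 1))
  termination_by i => i

lemma invF_eq (n : ℕ) (Lx : ℕ → List ℕ) (i : ℕ) :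
    invF n Lx i = stepB (AA n (invF n Lx) i) ((Lx i).map (· - 1)) := by
  rw [invF]
  congr 1
  unfold AA
  congr 1
  ext x
  simp





lemma sub_AA {n k : ℕ} (B : Fin k → Finset ℕ)
    (hdisj : ∀ i j, i ≠ j → Disjoint (B i) (B j))
    (hunion : Finset.univ.biUnion B = Finset.Icc 1 n) (i : Fin k) :
    B i ⊆ AA n (ext0 B) (i : ℕ) := by
  intro x hx
  rw [AA, Finset.mem_sdiff]
  refine ⟨?_, ?_⟩
  · rw [← hunion]
    exact Finset.mem_biUnion.2 ⟨i, Finset.mem_univ _, hx⟩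
  · intro hmem
    obtain ⟨j, hj, hxj⟩ := Finset.mem_biUnion.1 hmem
    rw [Finset.mem_range] at hj
    have hjk : j < k := hj.trans i.isLt
    rw [ext0, dif_pos hjk] at hxj
    have hne : (⟨j, hjk⟩ : Fin k) ≠ i := by
      intro h
      have := congrArg Fin.val h
      simp at this
      omega
    exact (Finset.disjoint_left.1 (hdisj _ _ hne)) hxj hx

lemma AA_k_empty {n k : ℕ} (B : Fin k → Finset ℕ)
    (hunion : Finset.univ.biUnion B = Finset.Icc 1 n) :
    AA n (ext0 B) k = ∅ := by
  ext x
  simp only [Finset.notMem_empty, iff_false]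
  intro hmem
  rw [AA, Finset.mem_sdiff] at hmem
  obtain ⟨hx, hnot⟩ := hmem
  rw [← hunion] at hx
  obtain ⟨i, _, hxi⟩ := Finset.mem_biUnion.1 hx
  apply hnot
  refine Finset.mem_biUnion.2 ⟨(i : ℕ), Finset.mem_range.2 i.isLt, ?_⟩
  rw [ext0, dif_pos i.isLt, Fin.eta]
  exact hxi






/-- With `A₁ = {1,…,n}`, `A_{i+1} = A_i ∖ B_i`, and
`(β_{i,1},…,β_{i,s_i}) = EP_{A_i}(B_i)`, `n_{i,j} = #β_{i,j} + 1`, the assignment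
`(B₁,…,B_k) ↦ ((n_{i,1},…,n_{i,s_i}))_i` is a bijection from ordered partitions of
`{1,…,n}` of length `k` onto the set of admissible leaf-sequence data. -/
theorem statement3 (n k : ℕ) (hn : 1 ≤ n) (hk : 1 ≤ k) (hkn : k ≤ n) :
    Set.BijOn
      (fun (B : Fin k → Finset ℕ) (i : Fin k) =>
        (EP (Finset.Icc 1 n \ (Finset.univ.filter (fun j => j < i)).biUnion B) (B i)).map
          (fun β => β.card + 1))
      (OrdPartFn n k) (LeafSeqs n k) := by
  refine ⟨?_, ?_, ?_⟩
  · -- MapsTo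
    intro B hB
    obtain ⟨hne, hdisj, hunion⟩ := hB
    have hsub := sub_AA B hdisj hunion
    have hext : ∀ i : Fin k, ext0 B (i : ℕ) = B i := by
      intro i; rw [ext0, dif_pos i.isLt, Fin.eta]
    have hval : ∀ i : Fin k,
        (EP (Finset.Icc 1 n \ (Finset.univ.filter (fun j => j < i)).biUnion B) (B i)).map
          (fun β => β.card + 1)
        = ((EP (AA n (ext0 B) (i : ℕ)) (B i)).map Finset.card).map (· + 1) := by
      intro i
      rw [stmtA_eq n B i, List.map_map]
      rfl
    have hlen : ∀ i : Fin k,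
        ((EP (AA n (ext0 B) (i : ℕ)) (B i)).map Finset.card).length
          = (AA n (ext0 B) ((i : ℕ) + 1)).card + 1 := by
      intro i
      rw [List.length_map, EP_length, AA_succ, hext]
    have hsum : ∀ i : Fin k,
        ((EP (AA n (ext0 B) (i : ℕ)) (B i)).map Finset.card).sum = (B i).card :=
      fun i => EP_sum _ _ (hsub i)
    have hchain : ∀ i : Fin k,
        (AA n (ext0 B) ((i : ℕ) + 1)).card + (B i).card = (AA n (ext0 B) (i : ℕ)).card := by
      intro i
      rw [AA_succ, hext]
      exact Finset.card_sdiff_add_card_eq_card (hsub i)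
    refine ⟨?_, ?_, ?_, ?_, ?_⟩
    · intro i m hm
      simp only [] at hm
      rw [hval i] at hm
      obtain ⟨c, _, rfl⟩ := List.mem_map.1 hm
      omega
    · intro i hi
      simp only []
      rw [hval i, List.length_map, hlen i]
      have : (i : ℕ) + 1 = k := by omega
      rw [this, AA_k_empty B hunion]
      simp
    · intro i h
      simp only []
      rw [hval i, hval ⟨(i : ℕ) + 1, h⟩, List.length_map, hlen i, sum_map_succ]
      have h2 := hlen ⟨(i : ℕ) + 1, h⟩
      have h3 := hsum ⟨(i : ℕ) + 1, h⟩
      have h4 := hchain ⟨(i : ℕ) + 1, h⟩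
      simp only [List.length_map, Fin.val_mk] at h2 h3 h4 ⊢
      omega
    · intro i
      obtain ⟨x, hx⟩ := Finset.nonempty_iff_ne_empty.2 (hne i)
      obtain ⟨β, hβ, hxβ⟩ := EP_cover (AA n (ext0 B) (i : ℕ)) (B i) hx
      refine ⟨β.card + 1, ?_, ?_⟩
      · simp only []
        rw [hval i]
        exact List.mem_map.2 ⟨β.card, List.mem_map.2 ⟨β, hβ, rfl⟩, rfl⟩
      · have : 0 < β.card := Finset.card_pos.2 ⟨x, hxβ⟩
        omega
    · have heq : ∀ i : Fin k,
          (((fun (B : Fin k → Finset ℕ) (i : Fin k) =>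
            (EP (Finset.Icc 1 n \ (Finset.univ.filter (fun j => j < i)).biUnion B) (B i)).map
              (fun β => β.card + 1)) B i).map (fun m => m - 1)).sum = (B i).card := by
        intro i
        simp only []
        rw [hval i, map_succ_pred, hsum i]
      rw [Finset.sum_congr rfl (fun i _ => heq i)]
      rw [← Finset.card_biUnion (fun i _ j _ hij => hdisj i j hij), hunion, Nat.card_Icc]
      omega
  · -- InjOn
    intro B hB B' hB' hfeq
    obtain ⟨hne, hdisj, hunion⟩ := hB
    obtain ⟨hne', hdisj', hunion'⟩ := hB'
    have hsub := sub_AA B hdisj hunion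
    have hsub' := sub_AA B' hdisj' hunion'
    suffices hsuff : ∀ m, ∀ h : m < k, B ⟨m, h⟩ = B' ⟨m, h⟩ by
      funext i
      have := hsuff (i : ℕ) i.isLt
      simpa using this
    intro m
    induction m using Nat.strong_induction_on with
    | _ m ih =>
      intro hmk
      have hAAeq : AA n (ext0 B) m = AA n (ext0 B') m := by
        apply AA_congr
        intro j hj
        have hjk : j < k := hj.trans hmk
        rw [ext0, ext0, dif_pos hjk, dif_pos hjk]
        exact ih j hj hjk
      have hfi := congrFun hfeq ⟨m, hmk⟩
      simp only [] at hfi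
      rw [stmtA_eq n B ⟨m, hmk⟩, stmtA_eq n B' ⟨m, hmk⟩] at hfi
      have hcards : (EP (AA n (ext0 B) m) (B ⟨m, hmk⟩)).map Finset.card
          = (EP (AA n (ext0 B') m) (B' ⟨m, hmk⟩)).map Finset.card := by
        have h2 := congrArg (List.map (· - 1)) hfi
        simp only [List.map_map] at h2
        have hcomp : ((fun x => x - 1) ∘ fun β : Finset ℕ => β.card + 1) = Finset.card := by
          funext β; simp
        rwa [hcomp] at h2
      rw [← hAAeq] at hcards
      have hs := hsub ⟨m, hmk⟩
      have hs' := hsub' ⟨m, hmk⟩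
      rw [← hAAeq] at hs'
      exact EP_inj _ _ _ hs hs' hcards
  · -- SurjOn
    intro L hL
    obtain ⟨h1, h2, h3, h4, h5⟩ := hL
    set Lx : ℕ → List ℕ := fun m => if h : m < k then L ⟨m, h⟩ else [] with hLxdef
    have hLxval : ∀ m (h : m < k), Lx m = L ⟨m, h⟩ := by
      intro m h
      simp only [hLxdef]
      exact dif_pos h
    have hLpos : ∀ m (h : m < k), ∀ x ∈ Lx m, 1 ≤ x := by
      intro m h x hx
      rw [hLxval m h] at hx
      exact h1 ⟨m, h⟩ x hx
    set F := invF n Lx with hFdef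
    have tel : ∀ m i, i + m + 1 = k →
        (Lx i).sum = 1 + ∑ j ∈ Finset.Ico i k, ((Lx j).map (· - 1)).sum := by
      intro m
      induction m with
      | zero =>
        intro i hi
        have hik : i < k := by omega
        have hlen1 : (Lx i).length = 1 := by
          rw [hLxval i hik]
          exact h2 ⟨i, hik⟩ (show i = k - 1 by omega)
        have hsp := sum_map_pred (Lx i) (hLpos i hik)
        have hIco : Finset.Ico i k = {i} := by
          ext j
          simp only [Finset.mem_Ico, Finset.mem_singleton]
          omega
        rw [hIco, Finset.sum_singleton]
        omega
      | succ m ihm =>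
        intro i hi
        have hik : i < k := by omega
        have h1k : i + 1 < k := by omega
        have hrec := ihm (i + 1) (by omega)
        have hlen : (Lx i).length = (Lx (i + 1)).sum := by
          rw [hLxval i hik, hLxval (i + 1) h1k]
          exact h3 ⟨i, hik⟩ h1k
        have hsp := sum_map_pred (Lx i) (hLpos i hik)
        have hsplit := Finset.sum_eq_sum_Ico_succ_bot hik (fun j => ((Lx j).map (· - 1)).sum)
        omega
    have hsum0 : (Lx 0).sum = n + 1 := by
      have ht := tel (k - 1) 0 (by omega)
      have hr : ∑ j ∈ Finset.Ico 0 k, ((Lx j).map (· - 1)).sum = n := by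
        rw [← Finset.range_eq_Ico, ← Fin.sum_univ_eq_sum_range]
        rw [← h5]
        apply Finset.sum_congr rfl
        intro i _
        rw [hLxval (i : ℕ) i.isLt, Fin.eta]
      omega
    have spec : ∀ i, i < k → (Lx i).sum = (AA n F i).card + 1 := by
      intro i
      induction i with
      | zero =>
        intro _
        rw [AA_zero, Nat.card_Icc]
        omega
      | succ i ihi =>
        intro hik
        have hik' : i < k := by omega
        have hgood := ihi hik'
        have hsp := sum_map_pred (Lx i) (hLpos i hik')
        have hstep := stepB_spec (AA n F i) ((Lx i).map (· - 1))
          (by simp only [List.length_map]; omega)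
        rw [hFdef] at hstep
        rw [← invF_eq n Lx i] at hstep
        rw [← hFdef] at hstep
        have hlen : (Lx i).length = (Lx (i + 1)).sum := by
          rw [hLxval i hik', hLxval (i + 1) hik]
          exact h3 ⟨i, hik'⟩ hik
        have hlenEP : (AA n F i \ F i).card + 1 = (Lx i).length := by
          have hc := congrArg List.length hstep.2
          simp only [List.length_map] at hc
          rw [EP_length] at hc
          omega
        have hcard : (AA n F (i + 1)).card = (AA n F i \ F i).card := by rw [AA_succ]
        have hcardF : (F i).card = ((Lx i).map (· - 1)).sum := by
          rw [← EP_sum (AA n F i) (F i) hstep.1, hstep.2]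
        have hsdiff : (AA n F i \ F i).card + (F i).card = (AA n F i).card :=
          Finset.card_sdiff_add_card_eq_card hstep.1
        omega
    have hspec : ∀ i, i < k → F i ⊆ AA n F i ∧
        (EP (AA n F i) (F i)).map Finset.card = (Lx i).map (· - 1) := by
      intro i hik
      have hgood := spec i hik
      have hsp := sum_map_pred (Lx i) (hLpos i hik)
      have hstep := stepB_spec (AA n F i) ((Lx i).map (· - 1))
        (by simp only [List.length_map]; omega)
      rw [hFdef] at hstep
      rw [← invF_eq n Lx i] at hstep
      rw [← hFdef] at hstep
      exact hstep
    have hAAkempty : AA n F k = ∅ := by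
      have hk1 : k - 1 < k := by omega
      have hs := hspec (k - 1) hk1
      have hlen1 : (Lx (k - 1)).length = 1 := by
        rw [hLxval _ hk1]
        exact h2 ⟨k - 1, hk1⟩ rfl
      have hc := congrArg List.length hs.2
      simp only [List.length_map] at hc
      rw [EP_length] at hc
      have hck : (AA n F k).card = 0 := by
        have hkk : k - 1 + 1 = k := by omega
        rw [← hkk, AA_succ]
        omega
      exact Finset.card_eq_zero.1 hck
    refine ⟨fun i : Fin k => F (i : ℕ), ⟨?_, ?_, ?_⟩, ?_⟩
    · intro i
      have hs := hspec (i : ℕ) i.isLt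
      obtain ⟨m, hm, hm2⟩ := h4 i
      have hmem : m - 1 ∈ (Lx (i : ℕ)).map (· - 1) := by
        rw [hLxval _ i.isLt, Fin.eta]
        exact List.mem_map_of_mem hm
      have hle : m - 1 ≤ ((Lx (i : ℕ)).map (· - 1)).sum :=
        List.single_le_sum (fun x _ => Nat.zero_le x) _ hmem
      have hcardF : (F (i : ℕ)).card = ((Lx (i : ℕ)).map (· - 1)).sum := by
        rw [← EP_sum _ _ hs.1, hs.2]
      have hpos : 0 < (F (i : ℕ)).card := by omega
      exact Finset.nonempty_iff_ne_empty.1 (Finset.card_pos.1 hpos)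
    · have key : ∀ i j : Fin k, (i : ℕ) < (j : ℕ) → Disjoint (F (i : ℕ)) (F (j : ℕ)) := by
        intro i j hij
        rw [Finset.disjoint_left]
        intro x hxi hxj
        have hs := (hspec (j : ℕ) j.isLt).1 hxj
        rw [AA, Finset.mem_sdiff] at hs
        exact hs.2 (Finset.mem_biUnion.2 ⟨(i : ℕ), Finset.mem_range.2 hij, hxi⟩)
      intro i j hij
      have hne : (i : ℕ) ≠ (j : ℕ) := fun hh => hij (Fin.ext hh)
      rcases Nat.lt_or_ge (i : ℕ) (j : ℕ) with h | h
      · exact key i j h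
      · exact (key j i (by omega)).symm
    · ext x
      simp only [Finset.mem_biUnion, Finset.mem_univ, true_and]
      constructor
      · rintro ⟨i, hxi⟩
        exact AA_subset_Icc n F (i : ℕ) ((hspec (i : ℕ) i.isLt).1 hxi)
      · intro hx
        by_contra hnot
        push_neg at hnot
        have hxk : x ∈ AA n F k := by
          rw [AA, Finset.mem_sdiff]
          refine ⟨hx, ?_⟩
          intro hmem
          obtain ⟨j, hj, hxj⟩ := Finset.mem_biUnion.1 hmem
          rw [Finset.mem_range] at hj
          exact hnot ⟨j, hj⟩ hxj
        rw [hAAkempty] at hxk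
        exact absurd hxk (Finset.notMem_empty x)
    · funext i
      simp only []
      rw [stmtA_eq n (fun i : Fin k => F (i : ℕ)) i]
      have hAAeq : AA n (ext0 fun i : Fin k => F (i : ℕ)) (i : ℕ) = AA n F (i : ℕ) := by
        apply AA_congr
        intro j hj
        rw [ext0, dif_pos (hj.trans i.isLt)]
      rw [hAAeq]
      have hs := hspec (i : ℕ) i.isLt
      have hfin : ((EP (AA n F (i : ℕ)) (F (i : ℕ))).map Finset.card).map (· + 1) = L i := by
        rw [hs.2, hLxval _ i.isLt, Fin.eta]
        exact map_pred_succ (L i) (h1 i)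
      rw [← hfin, List.map_map]
      rfl



end Stmt3
end

section
/- Let R be a commutative ring with unity, let g: A → B be a chain map of chain complexes of R-modules, and fix n ≥ 1. Suppose g^{⊗n} maps A^{⊗n} isomorphically onto a subcomplex of B^{⊗n}, and there is a subcomplex X(n) ⊆ B^{⊗n} with B^{⊗n} = g^{⊗n}(A^{⊗n}) ⊕ X(n) as chain complexes and with H_∗ Hom(A^{⊗k}, X(n)) = 0 for all k ≥ 1. Then for every m ≥ 1 the chain map g̃: Hom(A^{⊗m}, A^{⊗n}) → Hom(A^{⊗m}, B^{⊗n}) defined by g̃(u) = g^{⊗n} ∘ u induces an isomorphism on homology of the Hom-complexes. -/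
namespace HomCx

/-- A ℤ-graded `R`-module with a family of maps `d p q : X p →ₗ X q`
(intended to vanish unless `q = p − 1`); chain complexes are those satisfying
`IsComplex`. -/
structure GCx (R : Type) [CommRing R] where
  X : ℤ → Type
  [grp : ∀ p, AddCommGroup (X p)]
  [mod : ∀ p, Module R (X p)]
  d : ∀ p q : ℤ, X p →ₗ[R] X q

attribute [instance] GCx.grp GCx.mod

variable {R : Type} [CommRing R]

/-- `A` is a chain complex: `d p q = 0` unless `q = p − 1`, and `d ∘ d = 0`. -/
def IsComplex (A : GCx R) : Prop :=
  (∀ p q : ℤ, q + 1 ≠ p → A.d p q = 0) ∧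
  (∀ p q r : ℤ, ∀ x : A.X p, A.d q r (A.d p q x) = 0)

/-- Degree-zero graded maps `A → B`. -/
abbrev CMap (A B : GCx R) : Type := ∀ p : ℤ, A.X p →ₗ[R] B.X p

/-- `g` is a chain map. -/
def IsChainMap {A B : GCx R} (g : CMap A B) : Prop :=
  ∀ p q : ℤ, ∀ x : A.X p, B.d p q (g p x) = g q (A.d p q x)

/-- Transport along an equality of degrees. -/
def xcast (B : GCx R) {u v : ℤ} (h : u = v) : B.X u →ₗ[R] B.X v := by
  subst h; exact LinearMap.id

/-- The tensor product of graded modules: `(A ⊗ B)_k = ⊕_{p} A_p ⊗ B_{k−p}` with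
differential `d_A ⊗ 1 + (−1)^p ⊗ d_B` (Koszul sign). -/
noncomputable def tensorCx (A B : GCx R) : GCx R where
  X k := DirectSum ℤ fun p => TensorProduct R (A.X p) (B.X (k - p))
  d k j := DirectSum.toModule R ℤ _ fun p =>
    ((DirectSum.lof R ℤ (fun p' => TensorProduct R (A.X p') (B.X (j - p'))) (p + j - k)).comp
        (TensorProduct.map (A.d p (p + j - k)) (xcast B (by ring))))
      + (((Int.negOnePow p : ℤ) : R) •
        ((DirectSum.lof R ℤ (fun p' => TensorProduct R (A.X p') (B.X (j - p'))) p).comp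
          (TensorProduct.map LinearMap.id (B.d (k - p) (j - p)))))

/-- The tensor product of graded maps. -/
noncomputable def tensorMap {A A' B B' : GCx R} (f : CMap A A') (g : CMap B B') :
    CMap (tensorCx A B) (tensorCx A' B') := fun k =>
  DirectSum.toModule R ℤ _ fun p =>
    (DirectSum.lof R ℤ (fun p' => TensorProduct R (A'.X p') (B'.X (k - p'))) p).comp
      (TensorProduct.map (f p) (g (k - p)))

/-- `tpow A n = A^{⊗(n+1)}`, so that `n` ranges over tensor powers `≥ 1`. -/
noncomputable def tpow (A : GCx R) : ℕ → GCx R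
  | 0 => A
  | n + 1 => tensorCx (tpow A n) A

/-- `tpowMap g n = g^{⊗(n+1)} : A^{⊗(n+1)} → B^{⊗(n+1)}`. -/
noncomputable def tpowMap {A B : GCx R} (g : CMap A B) : (n : ℕ) → CMap (tpow A n) (tpow B n)
  | 0 => g
  | n + 1 => tensorMap (tpowMap g n) g

/-- The degree-`k` component of the Hom-complex `Hom(A, B)`:
`Hom(A,B)_k = Π_p Hom_R(A_p, B_{p+k})`. -/
abbrev homCx (A B : GCx R) (k : ℤ) : Type := ∀ p : ℤ, A.X p →ₗ[R] B.X (p + k)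

/-- The Hom-complex differential `∇f = d_B ∘ f − (−1)^k f ∘ d_A`, recorded with two
indices (`nabla A B k j` vanishes unless `j = k − 1`, where it is the differential
`Hom(A,B)_k → Hom(A,B)_{k−1}`). -/
noncomputable def nabla (A B : GCx R) (k j : ℤ) (f : homCx A B k) : homCx A B j :=
  fun p =>
    (B.d (p + k) (p + j)).comp (f p)
      - ((Int.negOnePow k : ℤ) : R) •
          ((xcast B (by ring : p + j - k + k = p + j)).comp
            ((f (p + j - k)).comp (A.d p (p + j - k))))

/-- `g̃ u = g ∘ u : Hom(A, B₁)_k → Hom(A, B₂)_k` for `g : B₁ → B₂`. -/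
noncomputable def tilde (A : GCx R) {B₁ B₂ : GCx R} (g : CMap B₁ B₂) (k : ℤ)
    (u : homCx A B₁ k) : homCx A B₂ k := fun p => (g (p + k)).comp (u p)

/-- `g` induces an isomorphism on homology in every degree (stated elementarily via
cycles and boundaries). -/
def IsQuasiIso {A B : GCx R} (g : CMap A B) : Prop :=
  ∀ p : ℤ,
    (∀ x : A.X p, A.d p (p - 1) x = 0 →
      (∃ z : B.X (p + 1), g p x = B.d (p + 1) p z) →
      ∃ w : A.X (p + 1), x = A.d (p + 1) p w) ∧
    (∀ y : B.X p, B.d p (p - 1) y = 0 →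
      ∃ x : A.X p, A.d p (p - 1) x = 0 ∧
        ∃ z : B.X (p + 1), g p x - y = B.d (p + 1) p z)

/-- The map `g̃ = (g ∘ −) : Hom(A, B₁) → Hom(A, B₂)` induces an isomorphism on
homology of the Hom-complexes in every degree (stated elementarily via cycles and
boundaries). -/
def TildeHomologyIso (A B₁ B₂ : GCx R) (g : CMap B₁ B₂) : Prop :=
  ∀ k : ℤ,
    (∀ u : homCx A B₁ k, nabla A B₁ k (k - 1) u = 0 →
      (∃ w : homCx A B₂ (k + 1), nabla A B₂ (k + 1) k w = tilde A g k u) →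
      ∃ v : homCx A B₁ (k + 1), nabla A B₁ (k + 1) k v = u) ∧
    (∀ u' : homCx A B₂ k, nabla A B₂ k (k - 1) u' = 0 →
      ∃ u : homCx A B₁ k, nabla A B₁ k (k - 1) u = 0 ∧
        ∃ w : homCx A B₂ (k + 1), tilde A g k u - u' = nabla A B₂ (k + 1) k w)

end HomCx

namespace HomCx

variable {R : Type} [CommRing R]

lemma xcast_natural {B₁ B₂ : GCx R} (h : CMap B₁ B₂) {a b : ℤ} (e : a = b) (y : B₁.X a) :
    h b (xcast B₁ e y) = xcast B₂ e (h a y) := by subst e; rfl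

lemma tensorMap_chain {A A' B B' : GCx R} {f : CMap A A'} {g : CMap B B'}
    (hf : IsChainMap f) (hg : IsChainMap g) : IsChainMap (tensorMap f g) := by
  intro k j x
  have h : ((tensorCx A' B').d k j).comp (tensorMap f g k)
      = (tensorMap f g j).comp ((tensorCx A B).d k j) := by
    refine DirectSum.linearMap_ext _ fun p => ?_
    refine TensorProduct.ext' fun a b => ?_
    unfold tensorMap tensorCx
    simp only [LinearMap.comp_apply, tensorMap, tensorCx, DirectSum.toModule_lof,
      LinearMap.add_apply, LinearMap.smul_apply, TensorProduct.map_tmul, map_add, map_smul,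
      LinearMap.id_coe, id_eq]
    rw [hf p (p+j-k) a, hg (k-p) (j-p) b, xcast_natural g]
  exact LinearMap.congr_fun h x

lemma tpowMap_chain {A B : GCx R} {g : CMap A B} (hg : IsChainMap g) :
    ∀ n, IsChainMap (tpowMap g n)
  | 0 => hg
  | n+1 => tensorMap_chain (tpowMap_chain hg n) hg

lemma tilde_nabla (A : GCx R) {B₁ B₂ : GCx R} {h : CMap B₁ B₂} (hh : IsChainMap h)
    (k j : ℤ) (u : homCx A B₁ k) :
    nabla A B₂ k j (tilde A h k u) = tilde A h j (nabla A B₁ k j u) := by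
  funext p; ext x
  simp only [nabla, tilde, LinearMap.sub_apply, LinearMap.comp_apply, LinearMap.smul_apply,
    map_sub, map_smul]
  rw [hh (p+k) (p+j), xcast_natural h]

lemma nabla_sub (A B : GCx R) (k j : ℤ) (u v : homCx A B k) :
    nabla A B k j (u - v) = nabla A B k j u - nabla A B k j v := by
  funext p; ext x
  simp only [nabla, Pi.sub_apply, LinearMap.sub_apply, LinearMap.comp_apply,
    LinearMap.smul_apply, map_sub, smul_sub]
  abel

lemma nabla_neg (A B : GCx R) (k j : ℤ) (u : homCx A B k) :
    nabla A B k j (-u) = - nabla A B k j u := by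
  funext p; ext x
  simp only [nabla, Pi.neg_apply, LinearMap.sub_apply, LinearMap.comp_apply,
    LinearMap.neg_apply, LinearMap.smul_apply, map_neg, smul_neg]
  abel

lemma tilde_zero (A : GCx R) {B₁ B₂ : GCx R} (h : CMap B₁ B₂) (j : ℤ) :
    tilde A h j (0 : homCx A B₁ j) = 0 := by
  funext p; ext x; simp [tilde]

end HomCx

namespace HomCx
variable {R : Type} [CommRing R]

section proj
variable {E F : Type} [AddCommGroup E] [Module R E] [AddCommGroup F] [Module R F]
  (i : F →ₗ[R] E) (hi : Function.Injective i) (q : Submodule R E)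
  (h : IsCompl (LinearMap.range i) q)

lemma sub_proj_mem (y : E) : y - i (LinearMap.linearProjOfIsCompl q i hi h y) ∈ q := by
  have key : i (LinearMap.linearProjOfIsCompl q i hi h y)
      = ((LinearMap.range i).projectionOnto q h y : E) := by
    rw [LinearMap.linearProjOfIsCompl, LinearMap.comp_apply]
    generalize (LinearMap.range i).projectionOnto q h y = z
    conv_rhs => rw [← (LinearEquiv.ofInjective i hi).apply_symm_apply z]
    rw [LinearEquiv.ofInjective_apply]
    rfl
  rw [key]
  have := Submodule.projection_add_projection_eq_self h y
  have h2 : y - ((LinearMap.range i).projectionOnto q h y : E)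
      = (q.projectionOnto (LinearMap.range i) h.symm y : E) :=
    sub_eq_of_eq_add' this.symm
  rw [h2]; exact Subtype.coe_prop _
end proj

/-- Let `g : A → B` be a chain map of chain complexes of
`R`-modules and fix `n` (here `tpow B n = B^{⊗(n+1)}`, so `n` ranges over all
exponents `≥ 1`).  Suppose `g^{⊗n}` maps `A^{⊗n}` isomorphically onto a subcomplex of
`B^{⊗n}` (componentwise injectivity; the image is a subcomplex since `g^{⊗n}` is a
chain map), and suppose there is a subcomplex `X(n) = S` of `B^{⊗n}` with
`B^{⊗n} = g^{⊗n}(A^{⊗n}) ⊕ X(n)` as chain complexes and with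
`H_* Hom(A^{⊗k}, X(n)) = 0` for all `k ≥ 1` (every `∇`-cycle valued in `S` is the
`∇`-boundary of an element valued in `S`).  Then for every `m ≥ 1` the chain map
`g̃ : Hom(A^{⊗m}, A^{⊗n}) → Hom(A^{⊗m}, B^{⊗n})`, `g̃(u) = g^{⊗n} ∘ u`, induces an
isomorphism on homology of the Hom-complexes. -/
theorem statement10 (R : Type) [CommRing R] (A B : GCx R)
    (hA : IsComplex A) (hB : IsComplex B)
    (g : CMap A B) (hg : IsChainMap g) (n : ℕ)
    (hinj : ∀ p : ℤ, Function.Injective (tpowMap g n p))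
    (S : ∀ p : ℤ, Submodule R ((tpow B n).X p))
    (hSd : ∀ p q : ℤ, ∀ x, x ∈ S p → (tpow B n).d p q x ∈ S q)
    (hcompl : ∀ p : ℤ, IsCompl (LinearMap.range (tpowMap g n p)) (S p))
    (hacyclic : ∀ (k : ℕ) (z : ℤ) (u : homCx (tpow A k) (tpow B n) z),
      (∀ (p : ℤ) (x : (tpow A k).X p), u p x ∈ S (p + z)) →
      nabla (tpow A k) (tpow B n) z (z - 1) u = 0 →
      ∃ w : homCx (tpow A k) (tpow B n) (z + 1),
        (∀ (p : ℤ) (x : (tpow A k).X p), w p x ∈ S (p + (z + 1))) ∧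
        nabla (tpow A k) (tpow B n) (z + 1) z w = u) :
    ∀ m : ℕ, TildeHomologyIso (tpow A m) (tpow A n) (tpow B n) (tpowMap g n) := by
  intro m
  set G : CMap (tpow A n) (tpow B n) := tpowMap g n with hGdef
  have hG : IsChainMap G := tpowMap_chain hg n
  set π : CMap (tpow B n) (tpow A n) :=
    fun p => LinearMap.linearProjOfIsCompl (S p) (G p) (hinj p) (hcompl p) with hπdef
  have hπg : ∀ p x, π p (G p x) = x := fun p x =>
    LinearMap.linearProjOfIsCompl_apply_left (S p) (G p) (hinj p) (hcompl p) x
  have hσ : ∀ p y, y - G p (π p y) ∈ S p := fun p y =>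
    sub_proj_mem (G p) (hinj p) (S p) (hcompl p) y
  have hπ : IsChainMap π := by
    intro p q y
    apply hinj q
    have e1 : G q ((tpow A n).d p q (π p y)) = (tpow B n).d p q (G p (π p y)) :=
      (hG p q _).symm
    set L := (tpow A n).d p q (π p y)
    set Rr := π q ((tpow B n).d p q y)
    have hmem1 : G q L - G q Rr ∈ S q := by
      have h1 : G q L = (tpow B n).d p q y - (tpow B n).d p q (y - G p (π p y)) := by
        rw [e1, map_sub]; abel
      have h2' : (tpow B n).d p q y - G q Rr ∈ S q := hσ q _
      have h3 : (tpow B n).d p q (y - G p (π p y)) ∈ S q := hSd p q _ (hσ p y)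
      have : G q L - G q Rr
          = ((tpow B n).d p q y - G q Rr) - (tpow B n).d p q (y - G p (π p y)) := by
        rw [h1]; abel
      rw [this]; exact Submodule.sub_mem _ h2' h3
    have hmem2 : G q L - G q Rr ∈ LinearMap.range (G q) :=
      ⟨L - Rr, by rw [map_sub]⟩
    have h0 : G q L - G q Rr = 0 :=
      Submodule.disjoint_def.mp (hcompl q).disjoint _ hmem2 hmem1
    exact sub_eq_zero.mp h0
  intro k
  constructor
  · rintro u hu ⟨w, hw⟩
    refine ⟨tilde (tpow A m) π (k+1) w, ?_⟩
    have h1 := tilde_nabla (tpow A m) hπ (k+1) k w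
    rw [h1, hw]
    funext p; ext x
    simp only [tilde, LinearMap.comp_apply]
    exact hπg _ _
  · intro u' hu'
    set u : homCx (tpow A m) (tpow A n) k := tilde (tpow A m) π k u' with hudef
    have hu0 : nabla (tpow A m) (tpow A n) k (k-1) u = 0 := by
      rw [hudef, tilde_nabla (tpow A m) hπ k (k-1) u', hu', tilde_zero]
    refine ⟨u, hu0, ?_⟩
    set s : homCx (tpow A m) (tpow B n) k := u' - tilde (tpow A m) G k u with hsdef
    have hSval : ∀ p x, s p x ∈ S (p + k) := by
      intro p x
      have : s p x = u' p x - G (p+k) (π (p+k) (u' p x)) := rfl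
      rw [this]; exact hσ _ _
    have hcyc : nabla (tpow A m) (tpow B n) k (k-1) s = 0 := by
      rw [hsdef, nabla_sub, hu', tilde_nabla (tpow A m) hG k (k-1) u, hu0, tilde_zero,
        sub_zero]
    obtain ⟨w, hwS, hw⟩ := hacyclic m k s hSval hcyc
    refine ⟨-w, ?_⟩
    rw [nabla_neg, hw, hsdef, neg_sub]


end HomCx
end
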